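/- arXiv:1111.6782 — 2 statements merged into one kernel-verified Lean document; each statement's English description precedes it below -/
import Mathlib

section
/- Let α ∈ (2,3), β > 0, n ≥ 2, and let γ ∈ H^{(α+1)/2,2}(ℝ/ℤ,ℝⁿ) be injective and parametrized by arc-length. Then there exists a constant C < ∞, depending only on α, β and γ, such that for all s₁, τ₁, τ₂ ∈ [0,1] the function g^{α,β}_{s₁,τ₁,τ₂} belongs to L¹((ℝ/ℤ)×(−1/2,1/2), ℝⁿ) and ‖g^{α,β}_{s₁,τ₁,τ₂}‖_{L¹} ≤ C. -/
open MeasureTheory Filter Set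
open scoped RealInnerProductSpace ENNReal Topology

noncomputable section

/-- `ℝⁿ` -/
abbrev Rn (n : ℕ) := EuclideanSpace ℝ (Fin n)

variable {n : ℕ}

/-- A 1-periodic curve is injective as a map on `ℝ/ℤ`. -/
def PerInjective (γ : ℝ → Rn n) : Prop :=
  ∀ u v : ℝ, γ u = γ v → ∃ k : ℤ, v = u + k

/-- `γ` is a regular curve: `γ'(u) ≠ 0` for all `u`. -/
def RegularCurve (γ : ℝ → Rn n) : Prop := ∀ u : ℝ, deriv γ u ≠ 0

/-- `γ` is parametrized by arc-length: `|γ'(u)| = 1` for all `u`. -/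
def ArcLengthParam (γ : ℝ → Rn n) : Prop := ∀ u : ℝ, ‖deriv γ u‖ = 1

/-- The length `L(γ) = ∫₀¹ |γ'(θ)| dθ` of the closed curve `γ`. -/
def curveLen (γ : ℝ → Rn n) : ℝ := ∫ θ in (0:ℝ)..1, ‖deriv γ θ‖

/-- The arc length `L(γ|_{[u,u+w]}) = |∫_u^{u+w} |γ'(θ)| dθ|`. -/
def arcLen (γ : ℝ → Rn n) (u w : ℝ) : ℝ := |∫ θ in u..(u + w), ‖deriv γ θ‖|

/-- The intrinsic distance `d_γ(u+w,u)`. -/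
def idist (γ : ℝ → Rn n) (u w : ℝ) : ℝ :=
  min (arcLen γ u w) (curveLen γ - arcLen γ u w)

/-- The integrand of the O'Hara energy `E^α`. -/
def ohIntegrand (α : ℝ) (γ : ℝ → Rn n) (u w : ℝ) : ℝ :=
  (1 / ‖γ (u + w) - γ u‖ ^ α - 1 / idist γ u w ^ α) * ‖deriv γ (u + w)‖ * ‖deriv γ u‖

/-- The O'Hara energy `E^α`, with values in `[0,∞]`. -/
def oharaE (α : ℝ) (γ : ℝ → Rn n) : ℝ≥0∞ :=
  ∫⁻ u in Ioc (0:ℝ) 1, ∫⁻ w in Ioo (-(1:ℝ)/2) (1/2), ENNReal.ofReal (ohIntegrand α γ u w)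

/-- The O'Hara energy `E^α` as a real number. -/
def oharaER (α : ℝ) (γ : ℝ → Rn n) : ℝ := (oharaE α γ).toReal

/-- `[−1/2,−ε] ∪ [ε,1/2]`, the `w`-section of `U_ε`. -/
def Wset (ε : ℝ) : Set ℝ := Icc (-(1:ℝ)/2) (-ε) ∪ Icc ε (1/2)

/-- The truncated O'Hara energy `E^α_ε`, an integral over `U_ε`. -/
def oharaEeps (α ε : ℝ) (γ : ℝ → Rn n) : ℝ :=
  ∫ u in Ioc (0:ℝ) 1, ∫ w in Wset ε, ohIntegrand α γ u w

/-- `F` has directional (Gâteaux) derivative `d` at `γ` in direction `h`. -/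
def HasDirDeriv (F : (ℝ → Rn n) → ℝ) (γ h : ℝ → Rn n) (d : ℝ) : Prop :=
  Tendsto (fun τ : ℝ => (F (γ + τ • h) - F γ) / τ) (𝓝[≠] (0:ℝ)) (𝓝 d)

/-- Squared Gagliardo seminorm `[f]²_{H^{s,2}}` of a 1-periodic map. -/
def gagliardoSq (s : ℝ) {E : Type*} [NormedAddCommGroup E] (f : ℝ → E) : ℝ≥0∞ :=
  ∫⁻ u in Ioc (0:ℝ) 1, ∫⁻ w in Ioo (-(1:ℝ)/2) (1/2),
    ENNReal.ofReal (‖f (u + w) - f u‖ ^ 2 / |w| ^ (1 + 2 * s))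

/-- Membership in the fractional Sobolev space `H^{1+σ,2}(ℝ/ℤ,ℝⁿ)`, `σ ∈ (0,1)`:
a 1-periodic `C¹` function whose derivative has finite Gagliardo seminorm of order `σ`. -/
def MemH1 (σ : ℝ) (γ : ℝ → Rn n) : Prop :=
  Function.Periodic γ 1 ∧ ContDiff ℝ 1 γ ∧ gagliardoSq σ (deriv γ) < ⊤

/-- The norm of `H^{1+σ,2}(ℝ/ℤ,ℝⁿ)`. -/
def H1Norm (σ : ℝ) (γ : ℝ → Rn n) : ℝ :=
  Real.sqrt (∫ u in Ioc (0:ℝ) 1, (‖γ u‖ ^ 2 + ‖deriv γ u‖ ^ 2)) +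
    Real.sqrt ((gagliardoSq σ (deriv γ)).toReal)

/-- Membership of a 1-periodic map in `L²(ℝ/ℤ)`. -/
def MemL2per {E : Type*} [NormedAddCommGroup E] (f : ℝ → E) : Prop :=
  Function.Periodic f 1 ∧ AEStronglyMeasurable f (volume : Measure ℝ) ∧
    IntegrableOn (fun u => ‖f u‖ ^ 2) (Ioc (0:ℝ) 1) volume

/-- Membership in the fractional Sobolev space `H^{s,2}(ℝ/ℤ)`, `s ∈ (0,1)`. -/
def MemHs0 (s : ℝ) {E : Type*} [NormedAddCommGroup E] (f : ℝ → E) : Prop :=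
  MemL2per f ∧ gagliardoSq s f < ⊤

/-- The norm of `H^{s,2}(ℝ/ℤ)` for `s ∈ (0,1)`: `‖f‖_{L²} + [f]_{H^{s,2}}`. -/
def Hs0Norm (s : ℝ) {E : Type*} [NormedAddCommGroup E] (f : ℝ → E) : ℝ :=
  Real.sqrt (∫ u in Ioc (0:ℝ) 1, ‖f u‖ ^ 2) + Real.sqrt ((gagliardoSq s f).toReal)

/-- The `k`-th Fourier coefficient (`j`-th component) of a 1-periodic curve. -/
def fCoef (γ : ℝ → Rn n) (k : ℤ) (j : Fin n) : ℂ :=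
  ∫ u in (0:ℝ)..1, (γ u j : ℂ) * Complex.exp ((-2) * (Real.pi : ℂ) * Complex.I * (k : ℂ) * (u : ℂ))

/-- Membership in `H^{s,2}(ℝ/ℤ,ℝⁿ)` via the Fourier characterization:
`((1+|k|²)^{s/2} γ̂(k))_k ∈ ℓ²`. -/
def MemHF (s : ℝ) (γ : ℝ → Rn n) : Prop :=
  Function.Periodic γ 1 ∧ Continuous γ ∧
    Summable (fun k : ℤ => (1 + (k : ℝ) ^ 2) ^ s * ∑ j, ‖fCoef γ k j‖ ^ 2)

/-- The squared Fourier norm of `H^{s,2}(ℝ/ℤ,ℝⁿ)`. -/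
def fNormSq (s : ℝ) (γ : ℝ → Rn n) : ℝ :=
  ∑' k : ℤ, (1 + (k : ℝ) ^ 2) ^ s * ∑ j, ‖fCoef γ k j‖ ^ 2

/-- C¹-norm of a 1-periodic map. -/
def c1Norm (f : ℝ → Rn n) : ℝ := ⨆ u : Icc (0:ℝ) 1, (‖f u.1‖ + ‖deriv f u.1‖)

/-- The integrand of `Q(γ,h)`. -/
def Qintegrand (α : ℝ) (γ h : ℝ → Rn n) (u w : ℝ) : ℝ :=
  ⟪deriv γ u, deriv h u⟫ / |w| ^ α
    - ⟪γ (u + w) - γ u, h (u + w) - h u⟫ / |w| ^ (α + 2)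

/-- The integrand of `R(γ,h)`. -/
def Rintegrand (α : ℝ) (γ h : ℝ → Rn n) (u w : ℝ) : ℝ :=
  2 * ⟪deriv γ u, deriv h u⟫ * (1 / ‖γ (u + w) - γ u‖ ^ α - 1 / |w| ^ α)
    - α * ⟪γ (u + w) - γ u, h (u + w) - h u⟫ *
        (1 / ‖γ (u + w) - γ u‖ ^ (α + 2) - 1 / |w| ^ (α + 2))

/-- `R(γ,h)`, an absolutely convergent double integral over `(ℝ/ℤ) × [−1/2,1/2]`. -/
def Rval (α : ℝ) (γ h : ℝ → Rn n) : ℝ :=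
  ∫ p in (Ioc (0:ℝ) 1) ×ˢ (Icc (-(1:ℝ)/2) (1/2)), Rintegrand α γ h p.1 p.2

/-- `G^β(z)`, the analytic factor, extended by its limiting value `β/4` at `|z| = 1`. -/
def Gbeta {n : ℕ} (β : ℝ) (z : Rn n) : ℝ :=
  if ‖z‖ = 1 then β / 4
  else (1 - ‖z‖ ^ β) / (2 * ‖z‖ ^ β * (1 - ‖z‖ ^ 2))

/-- The function `g^{α,β}_{s₁,τ₁,τ₂}(u,w)`. -/
def gfun {n : ℕ} (α β s₁ τ₁ τ₂ : ℝ) (γ : ℝ → Rn n) (u w : ℝ) : Rn n :=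
  (Gbeta β (w⁻¹ • (γ (u + w) - γ u)) *
      (‖deriv γ (u + τ₁ * w) - deriv γ (u + τ₂ * w)‖ ^ 2 / |w| ^ α)) •
    deriv γ (u + s₁ * w)


/-! ### Auxiliary lemmas -/


/-- Lower integral of a `1`-periodic function over `(0,1]` is shift invariant. -/
lemma lint_per_shift (g : ℝ → ℝ≥0∞) (hg : Function.Periodic g 1) (c : ℝ) :
    ∫⁻ u in Ioc (0:ℝ) 1, g (u + c) = ∫⁻ u in Ioc (0:ℝ) 1, g u := by
  have h1 : ∫⁻ u in Ioc (0:ℝ) 1, g (u + c) = ∫⁻ u in Ioc c (c+1), g u := by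
    have hpre : ((· + c) ⁻¹' Ioc c (c+1)) = Ioc (0:ℝ) 1 := by
      ext x
      simp only [Set.mem_preimage, Set.mem_Ioc]
      constructor <;> intro h <;> exact ⟨by linarith [h.1], by linarith [h.2]⟩
    have := (measurePreserving_add_right (volume : Measure ℝ) c).setLIntegral_comp_preimage_emb
      (measurableEmbedding_addRight c) g (Ioc c (c+1))
    rw [hpre] at this; exact this
  have h2 : ∀ t : ℝ, ∫⁻ u in Ioc t (t+1), g u = ∫⁻ b : UnitAddCircle, hg.lift b := by
    intro t
    rw [← UnitAddCircle.lintegral_preimage t (hg.lift)]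
    apply setLIntegral_congr_fun measurableSet_Ioc
    exact fun x _ => (hg.lift_coe x).symm
  rw [h1, h2 c]
  have h0 := h2 0
  simp only [zero_add] at h0
  rw [h0]

/-- Scaling estimate for lower integrals over `(-1/2,1/2)`. -/
lemma lint_scale (H : ℝ → ℝ≥0∞) {l : ℝ} (hl : l ≠ 0) (hl1 : |l| ≤ 1) :
    ∫⁻ w in Ioo (-(1:ℝ)/2) (1/2), H (l * w) ≤
      ENNReal.ofReal |l⁻¹| * ∫⁻ t in Ioo (-(1:ℝ)/2) (1/2), H t := by
  set s : Set ℝ := Ioo (-(1:ℝ)/2) (1/2) with hs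
  have hmeas : MeasurableSet s := measurableSet_Ioo
  have hinj : Function.Injective (fun w : ℝ => l * w) := fun a b h => by
    field_simp at h; exact h
  have key : (fun w => s.indicator (fun w => H (l * w)) w)
      = fun w => (((fun t => l * t) '' s).indicator H) (l * w) := by
    funext w
    by_cases hw : w ∈ s
    · rw [Set.indicator_of_mem hw, Set.indicator_of_mem (Set.mem_image_of_mem _ hw)]
    · rw [Set.indicator_of_notMem hw, Set.indicator_of_notMem]
      exact fun hmem => hw ((hinj.mem_set_image).mp hmem)
  calc ∫⁻ w in s, H (l * w) = ∫⁻ w, s.indicator (fun w => H (l * w)) w := by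
        rw [lintegral_indicator hmeas]
    _ = ∫⁻ w, (((fun t => l * t) '' s).indicator H) (l * w) := by rw [key]
    _ = ∫⁻ t, (((fun t => l * t) '' s).indicator H) t ∂(Measure.map (fun t => l * t) volume) :=
        ((measurableEmbedding_mulLeft₀ hl).lintegral_map _).symm
    _ = ENNReal.ofReal |l⁻¹| * ∫⁻ t, (((fun t => l * t) '' s).indicator H) t := by
        rw [Real.map_volume_mul_left hl, lintegral_smul_measure, smul_eq_mul]
    _ ≤ ENNReal.ofReal |l⁻¹| * ∫⁻ t, s.indicator H t := by
        gcongr with t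
        rintro t ⟨w, hw, rfl⟩
        rw [hs, Set.mem_Ioo] at hw ⊢
        have h1 : |w| < 1/2 := abs_lt.mpr ⟨by linarith [hw.1], hw.2⟩
        have h2 : |l * w| < 1/2 := by
          rw [abs_mul]
          calc |l| * |w| ≤ 1 * |w| := by gcongr
            _ = |w| := one_mul _
            _ < 1/2 := h1
        rw [abs_lt] at h2
        exact ⟨by linarith [h2.1], h2.2⟩
    _ = ENNReal.ofReal |l⁻¹| * ∫⁻ t in s, H t := by rw [lintegral_indicator hmeas]

/-- The key scaling inequality for the dominating integral. -/
lemma claimB {α : ℝ} (hα1 : 1 ≤ α) (A : ℝ → ℝ≥0∞) (hA0 : A 0 = 0) {l : ℝ} (hl1 : |l| ≤ 1) :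
    ∫⁻ w in Ioo (-(1:ℝ)/2) (1/2), ENNReal.ofReal (1/|w| ^ α) * A (l * w)
      ≤ ∫⁻ w in Ioo (-(1:ℝ)/2) (1/2), ENNReal.ofReal (1/|w| ^ α) * A w := by
  have hα0 : α ≠ 0 := by linarith
  rcases eq_or_ne l 0 with rfl | hl
  · simp only [zero_mul, hA0, mul_zero, lintegral_const, zero_mul]
    exact zero_le
  · have hlpos : 0 < |l| := abs_pos.mpr hl
    set H : ℝ → ℝ≥0∞ := fun t => ENNReal.ofReal (1/|t| ^ α) * A t with hH
    have hpt : ∀ w : ℝ, ENNReal.ofReal (1/|w| ^ α) * A (l * w)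
        = ENNReal.ofReal (|l| ^ α) * H (l * w) := by
      intro w
      rcases eq_or_ne w 0 with rfl | hw
      · simp only [mul_zero, hA0, Set.mem_setOf_eq, abs_zero, Real.zero_rpow hα0, hH]
      · have hwpos : 0 < |w| := abs_pos.mpr hw
        have h1 : |l * w| ^ α = |l| ^ α * |w| ^ α := by
          rw [abs_mul, Real.mul_rpow (abs_nonneg l) (abs_nonneg w)]
        have h2 : (1:ℝ)/|w| ^ α = |l| ^ α * (1/|l * w| ^ α) := by
          rw [h1]
          have hlα : (0:ℝ) < |l| ^ α := Real.rpow_pos_of_pos hlpos α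
          have hwα : (0:ℝ) < |w| ^ α := Real.rpow_pos_of_pos hwpos α
          field_simp
        rw [hH]
        simp only
        rw [h2, ENNReal.ofReal_mul (Real.rpow_nonneg (abs_nonneg l) α), mul_assoc]
    calc ∫⁻ w in Ioo (-(1:ℝ)/2) (1/2), ENNReal.ofReal (1/|w| ^ α) * A (l * w)
        = ∫⁻ w in Ioo (-(1:ℝ)/2) (1/2), ENNReal.ofReal (|l| ^ α) * H (l * w) := by
          simp_rw [hpt]
      _ = ENNReal.ofReal (|l| ^ α) * ∫⁻ w in Ioo (-(1:ℝ)/2) (1/2), H (l * w) :=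
          lintegral_const_mul' _ _ ENNReal.ofReal_ne_top
      _ ≤ ENNReal.ofReal (|l| ^ α) * (ENNReal.ofReal |l⁻¹| *
            ∫⁻ t in Ioo (-(1:ℝ)/2) (1/2), H t) :=
          mul_le_mul_right (lint_scale H hl hl1) _
      _ = ENNReal.ofReal (|l| ^ (α - 1)) * ∫⁻ t in Ioo (-(1:ℝ)/2) (1/2), H t := by
          rw [← mul_assoc, ← ENNReal.ofReal_mul (Real.rpow_nonneg (abs_nonneg l) α)]
          congr 2
          rw [abs_inv, ← Real.rpow_neg_one |l|, ← Real.rpow_add hlpos]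
          ring_nf
      _ ≤ 1 * ∫⁻ t in Ioo (-(1:ℝ)/2) (1/2), H t := by
          apply mul_le_mul_left
          rw [show (1:ℝ≥0∞) = ENNReal.ofReal 1 by simp]
          exact ENNReal.ofReal_le_ofReal (Real.rpow_le_one (abs_nonneg l) hl1 (by linarith))
      _ = ∫⁻ t in Ioo (-(1:ℝ)/2) (1/2), H t := one_mul _

/-- FTC: the normalized chord is the average of the derivative. -/
lemma z_eq {n : ℕ} {γ : ℝ → Rn n} (hγ : ContDiff ℝ 1 γ) (u : ℝ) {w : ℝ} (hw : w ≠ 0) :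
    w⁻¹ • (γ (u + w) - γ u) = ∫ τ in (0:ℝ)..1, deriv γ (u + τ * w) := by
  have hcont : Continuous (deriv γ) := hγ.continuous_deriv le_rfl
  have hftc : γ (u + w) - γ u = ∫ θ in u..(u+w), deriv γ θ := by
    rw [intervalIntegral.integral_deriv_eq_sub
      (fun x _ => (hγ.differentiable one_ne_zero).differentiableAt)
      (hcont.intervalIntegrable _ _)]
  have hsub : ∫ τ in (0:ℝ)..1, deriv γ (u + τ * w) = w⁻¹ • ∫ θ in u..(u+w), deriv γ θ := by
    have h3 := intervalIntegral.integral_comp_mul_add (a := (0:ℝ)) (b := 1) (f := deriv γ) hw u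
    simp only [mul_zero, zero_add, mul_one] at h3
    rw [add_comm w u] at h3
    rw [← h3]
    congr 1
    funext τ
    congr 1
    ring
  rw [hsub, ← hftc]

/-- Uniform lower bound for the chord-arc ratio of an injective arc-length curve. -/
lemma exists_lower {n : ℕ} {γ : ℝ → Rn n}
    (hγ : ContDiff ℝ 1 γ)
    (hinj : ∀ u v : ℝ, γ u = γ v → ∃ k : ℤ, v = u + k)
    (harc : ∀ u : ℝ, ‖deriv γ u‖ = 1) :
    ∃ c : ℝ, 0 < c ∧ ∀ u ∈ Icc (0:ℝ) 1, ∀ w ∈ Icc (-(1:ℝ)/2) (1/2),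
      c ≤ ‖∫ τ in (0:ℝ)..1, deriv γ (u + τ * w)‖ := by
  have hcont : Continuous (deriv γ) := hγ.continuous_deriv le_rfl
  set F : ℝ × ℝ → ℝ := fun p => ‖∫ τ in (0:ℝ)..1, deriv γ (p.1 + τ * p.2)‖ with hF
  have hFcont : Continuous F := by
    apply Continuous.norm
    apply intervalIntegral.continuous_parametric_intervalIntegral_of_continuous'
    exact hcont.comp ((continuous_fst.fst).add (continuous_snd.mul continuous_fst.snd))
  set K : Set (ℝ × ℝ) := Icc (0:ℝ) 1 ×ˢ Icc (-(1:ℝ)/2) (1/2) with hK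
  have hKc : IsCompact K := (isCompact_Icc).prod isCompact_Icc
  have hKne : K.Nonempty :=
    ⟨(0, 0), Set.mem_prod.mpr ⟨⟨le_refl 0, by norm_num⟩, ⟨by norm_num, by norm_num⟩⟩⟩
  obtain ⟨p₀, hp₀K, hp₀⟩ := hKc.exists_isMinOn hKne hFcont.continuousOn
  refine ⟨F p₀, ?_, fun u hu w hw => (isMinOn_iff.mp hp₀) (u, w) (Set.mem_prod.mpr ⟨hu, hw⟩)⟩
  rcases eq_or_ne p₀.2 0 with h0 | h0
  · have h1 : F p₀ = 1 := by
      rw [hF]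
      simp only [h0, mul_zero, add_zero]
      rw [intervalIntegral.integral_const, sub_zero, one_smul, harc]
    rw [h1]; norm_num
  · have hz : (∫ τ in (0:ℝ)..1, deriv γ (p₀.1 + τ * p₀.2))
        = (p₀.2)⁻¹ • (γ (p₀.1 + p₀.2) - γ p₀.1) := (z_eq hγ p₀.1 h0).symm
    rw [hF]
    simp only
    rw [hz, norm_pos_iff]
    intro hcontra
    have hne : γ (p₀.1 + p₀.2) - γ p₀.1 = 0 :=
      (smul_eq_zero.mp hcontra).resolve_left (inv_ne_zero h0)
    obtain ⟨k, hk⟩ := hinj p₀.1 (p₀.1 + p₀.2) (sub_eq_zero.mp hne).symm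
    have hw2 : p₀.2 = (k : ℝ) := by linarith [hk]
    have hk0 : k ≠ 0 := by rintro rfl; simp at hw2; exact h0 hw2
    have hge : (1:ℝ) ≤ |(k:ℝ)| := by exact_mod_cast Int.one_le_abs hk0
    have hb : |p₀.2| ≤ 1/2 := by
      have h2 := (Set.mem_prod.mp hp₀K).2
      rw [Set.mem_Icc] at h2
      exact abs_le.mpr ⟨by linarith [h2.1], h2.2⟩
    rw [hw2] at hb; linarith

/-- Uniform bound for `Gbeta` away from `0`. -/
lemma gbeta_bound {β c : ℝ} (hβ : 0 < β) (hc : 0 < c) {n : ℕ} {z : Rn n}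
    (h1 : c ≤ ‖z‖) (h2 : ‖z‖ ≤ 1) :
    |Gbeta β z| ≤ max (β/4) (max β 1 / (2 * c ^ β)) := by
  set t := ‖z‖ with ht
  unfold Gbeta
  rw [← ht]
  by_cases hone : t = 1
  · rw [if_pos hone, abs_of_pos (by linarith)]
    exact le_max_left _ _
  · rw [if_neg hone]
    have htlt : t < 1 := lt_of_le_of_ne h2 hone
    have htpos : 0 < t := lt_of_lt_of_le hc h1
    have hβt : t ^ β ≤ 1 := Real.rpow_le_one htpos.le h2 hβ.le
    have hnum0 : 0 ≤ 1 - t ^ β := by linarith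
    have hBpos : (0:ℝ) < max β 1 := lt_of_lt_of_le one_pos (le_max_right _ _)
    have hnum : 1 - t ^ β ≤ max β 1 * (1 - t) := by
      rcases le_or_gt 1 β with hb | hb
      · have hber := one_add_mul_self_le_rpow_one_add (s := t - 1) (by linarith) hb
        rw [show (1:ℝ) + (t - 1) = t by ring] at hber
        calc 1 - t ^ β ≤ β * (1 - t) := by nlinarith [hber]
          _ ≤ max β 1 * (1 - t) := by
              apply mul_le_mul_of_nonneg_right (le_max_left _ _) (by linarith)
      · have hmono : t ^ (1:ℝ) ≤ t ^ β := Real.rpow_le_rpow_of_exponent_ge htpos h2 hb.le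
        rw [Real.rpow_one] at hmono
        calc 1 - t ^ β ≤ 1 - t := by linarith
          _ = 1 * (1 - t) := (one_mul _).symm
          _ ≤ max β 1 * (1 - t) := by
              apply mul_le_mul_of_nonneg_right (le_max_right _ _) (by linarith)
    have hcβ : (0:ℝ) < c ^ β := Real.rpow_pos_of_pos hc β
    have htβ : c ^ β ≤ t ^ β := Real.rpow_le_rpow hc.le h1 hβ.le
    have htβpos : (0:ℝ) < t ^ β := lt_of_lt_of_le hcβ htβ
    have hden : 2 * c ^ β * (1 - t) ≤ 2 * t ^ β * (1 - t ^ 2) := by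
      nlinarith [mul_nonneg (sub_nonneg.mpr htβ) (by linarith : (0:ℝ) ≤ 1 - t),
        mul_nonneg (mul_nonneg htβpos.le htpos.le) (by linarith : (0:ℝ) ≤ 1 - t)]
    have hdpos : (0:ℝ) < 2 * c ^ β * (1 - t) := mul_pos (by positivity) (by linarith)
    have hdenpos : (0:ℝ) < 2 * t ^ β * (1 - t ^ 2) := lt_of_lt_of_le hdpos hden
    rw [abs_of_nonneg (div_nonneg hnum0 hdenpos.le)]
    calc (1 - t ^ β) / (2 * t ^ β * (1 - t ^ 2))
        ≤ (max β 1 * (1 - t)) / (2 * c ^ β * (1 - t)) :=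
          div_le_div₀ (mul_nonneg hBpos.le (by linarith)) hnum hdpos hden
      _ = max β 1 / (2 * c ^ β) := by
          rw [mul_div_mul_right _ _ (by intro h; nlinarith : (1:ℝ) - t ≠ 0)]
      _ ≤ max (β/4) (max β 1 / (2 * c ^ β)) := le_max_right _ _

/-- For `α ∈ (2,3)`, `β > 0` and an injective arc-length curve
`γ ∈ H^{(α+1)/2,2}`, the functions `g^{α,β}_{s₁,τ₁,τ₂}` lie in `L¹((ℝ/ℤ)×(−1/2,1/2),ℝⁿ)` with
a uniform bound on their `L¹`-norms. -/
theorem statement14 {n : ℕ} (hn : 2 ≤ n) {α β : ℝ} (hα : α ∈ Ioo (2:ℝ) 3) (hβ : 0 < β)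
    {γ : ℝ → Rn n} (hγ : MemH1 ((α - 1) / 2) γ) (hinj : PerInjective γ)
    (harc : ArcLengthParam γ) :
    ∃ C : ℝ, ∀ s₁ ∈ Icc (0:ℝ) 1, ∀ τ₁ ∈ Icc (0:ℝ) 1, ∀ τ₂ ∈ Icc (0:ℝ) 1,
      IntegrableOn (fun p : ℝ × ℝ => gfun α β s₁ τ₁ τ₂ γ p.1 p.2)
        ((Ioc (0:ℝ) 1) ×ˢ (Ioo (-(1:ℝ)/2) (1/2))) volume ∧
      (∫ p in (Ioc (0:ℝ) 1) ×ˢ (Ioo (-(1:ℝ)/2) (1/2)), ‖gfun α β s₁ τ₁ τ₂ γ p.1 p.2‖)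
        ≤ C := by
  obtain ⟨hper, hC1, hgag⟩ := hγ
  have hα2 : (2:ℝ) < α := hα.1
  have hα3 : α < 3 := hα.2
  have hα0 : α ≠ 0 := by linarith
  have hαnn : (0:ℝ) ≤ α := by linarith
  have hfc : Continuous (deriv γ) := hC1.continuous_deriv le_rfl
  have hγc : Continuous γ := hC1.continuous
  have hfper : Function.Periodic (deriv γ) 1 := by
    intro x
    have h1 : (fun y => γ (y + 1)) = γ := funext hper
    calc deriv γ (x + 1) = deriv (fun y => γ (y + 1)) x := (deriv_comp_add_const γ 1 x).symm
      _ = deriv γ x := by rw [h1]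
  obtain ⟨c, hcpos, hlow⟩ := exists_lower hC1 hinj harc
  set M : ℝ := max (β/4) (max β 1 / (2 * c ^ β)) with hM
  have hM0 : 0 ≤ M := le_trans (by positivity) (le_max_left _ _)
  set A : ℝ → ℝ≥0∞ :=
    fun t => ∫⁻ u in Ioc (0:ℝ) 1, ENNReal.ofReal (‖deriv γ (u + t) - deriv γ u‖ ^ 2) with hA
  have hA0 : A 0 = 0 := by simp [hA]
  set Kq : ℝ≥0∞ := ∫⁻ w in Ioo (-(1:ℝ)/2) (1/2), ENNReal.ofReal (1/|w| ^ α) * A w with hKq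
  have hbase : Measurable (fun p : ℝ × ℝ =>
      ENNReal.ofReal (‖deriv γ (p.1 + p.2) - deriv γ p.1‖ ^ 2 / |p.2| ^ α)) := by
    apply ENNReal.measurable_ofReal.comp
    apply Measurable.div
    · exact (((hfc.comp (continuous_fst.add continuous_snd)).sub
        (hfc.comp continuous_fst)).norm.pow 2).measurable
    · exact ((Real.continuous_rpow_const hαnn).comp continuous_snd.abs).measurable
  have inner_eq : ∀ t1 t2 w : ℝ,
      (∫⁻ u in Ioc (0:ℝ) 1,
        ENNReal.ofReal (‖deriv γ (u + t1*w) - deriv γ (u + t2*w)‖ ^ 2 / |w| ^ α))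
        = ENNReal.ofReal (1/|w| ^ α) * A ((t1 - t2) * w) := by
    intro t1 t2 w
    have h1 : ∀ u : ℝ, ENNReal.ofReal (‖deriv γ (u + t1*w) - deriv γ (u + t2*w)‖ ^ 2 / |w| ^ α)
        = ENNReal.ofReal (1/|w| ^ α)
          * ENNReal.ofReal (‖deriv γ (u + t1*w) - deriv γ (u + t2*w)‖ ^ 2) := by
      intro u
      rw [show ‖deriv γ (u + t1*w) - deriv γ (u + t2*w)‖ ^ 2 / |w| ^ α
        = (1/|w| ^ α) * ‖deriv γ (u + t1*w) - deriv γ (u + t2*w)‖ ^ 2 by ring,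
        ENNReal.ofReal_mul (by positivity)]
    simp_rw [h1]
    rw [lintegral_const_mul' _ _ ENNReal.ofReal_ne_top]
    congr 1
    set g : ℝ → ℝ≥0∞ :=
      fun u => ENNReal.ofReal (‖deriv γ (u + (t1 - t2)*w) - deriv γ u‖ ^ 2) with hg
    have hgper : Function.Periodic g 1 := by
      intro x
      simp only [hg]
      rw [show x + 1 + (t1 - t2)*w = (x + (t1 - t2)*w) + 1 by ring,
        hfper (x + (t1 - t2)*w), hfper x]
    have h2 : ∀ u : ℝ,
        ENNReal.ofReal (‖deriv γ (u + t1*w) - deriv γ (u + t2*w)‖ ^ 2) = g (u + t2*w) := by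
      intro u
      simp only [hg]
      rw [show u + t2*w + (t1 - t2)*w = u + t1*w by ring]
    simp_rw [h2]
    exact lint_per_shift g hgper (t2*w)
  have hKfin : Kq < ⊤ := by
    have hswap : gagliardoSq ((α-1)/2) (deriv γ)
        = ∫⁻ w in Ioo (-(1:ℝ)/2) (1/2), ∫⁻ u in Ioc (0:ℝ) 1,
            ENNReal.ofReal (‖deriv γ (u + w) - deriv γ u‖ ^ 2 / |w| ^ α) := by
      unfold gagliardoSq
      rw [show 1 + 2 * ((α - 1)/2) = α by ring]
      exact lintegral_lintegral_swap hbase.aemeasurable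
    have hKeq : Kq = gagliardoSq ((α-1)/2) (deriv γ) := by
      rw [hswap, hKq]
      apply setLIntegral_congr_fun measurableSet_Ioo
      intro w _
      have h := inner_eq 1 0 w
      simp only [one_mul, zero_mul, add_zero, sub_zero] at h
      exact h.symm
    rw [hKeq]; exact hgag
  refine ⟨(ENNReal.ofReal M * Kq).toReal, ?_⟩
  intro s₁ hs₁ τ₁ hτ₁ τ₂ hτ₂
  set S : Set (ℝ × ℝ) := (Ioc (0:ℝ) 1) ×ˢ (Ioo (-(1:ℝ)/2) (1/2)) with hS
  have hSmeas : MeasurableSet S := measurableSet_Ioc.prod measurableSet_Ioo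
  set q : ℝ × ℝ → ℝ :=
    fun p => ‖deriv γ (p.1 + τ₁ * p.2) - deriv γ (p.1 + τ₂ * p.2)‖ ^ 2 / |p.2| ^ α with hq
  have hq0 : ∀ p, 0 ≤ q p :=
    fun p => div_nonneg (by positivity) (Real.rpow_nonneg (abs_nonneg _) _)
  have hqmeas : Measurable q := by
    apply Measurable.div
    · exact (((hfc.comp (continuous_fst.add (continuous_const.mul continuous_snd))).sub
        (hfc.comp (continuous_fst.add (continuous_const.mul continuous_snd)))).norm.pow 2).measurable
    · exact ((Real.continuous_rpow_const hαnn).comp continuous_snd.abs).measurable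
  have hqprod : Measurable (fun p : ℝ × ℝ => ENNReal.ofReal (q p)) :=
    ENNReal.measurable_ofReal.comp hqmeas
  have hJle : ∫⁻ p in S, ENNReal.ofReal (q p) ≤ Kq := by
    rw [hS, Measure.volume_eq_prod, ← Measure.prod_restrict,
      lintegral_prod_symm _ hqprod.aemeasurable]
    calc (∫⁻ w in Ioo (-(1:ℝ)/2) (1/2), ∫⁻ u in Ioc (0:ℝ) 1, ENNReal.ofReal (q (u, w)))
        = ∫⁻ w in Ioo (-(1:ℝ)/2) (1/2), ENNReal.ofReal (1/|w| ^ α) * A ((τ₁ - τ₂) * w) :=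
          setLIntegral_congr_fun measurableSet_Ioo (fun w _ => inner_eq τ₁ τ₂ w)
      _ ≤ Kq := claimB (by linarith) A hA0
          (abs_le.mpr ⟨by linarith [hτ₁.1, hτ₂.2], by linarith [hτ₁.2, hτ₂.1]⟩)
  have hGbm : Measurable (Gbeta β : Rn n → ℝ) := by
    have hset : MeasurableSet {z : Rn n | ‖z‖ = 1} := measurable_norm (measurableSet_singleton 1)
    exact Measurable.ite hset measurable_const
      (Measurable.div
        ((continuous_const.sub ((Real.continuous_rpow_const hβ.le).comp continuous_norm)).measurable)
        (((continuous_const.mul ((Real.continuous_rpow_const hβ.le).comp continuous_norm)).mul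
          (continuous_const.sub (continuous_norm.pow 2))).measurable))
  have hzm : Measurable (fun p : ℝ × ℝ => (p.2)⁻¹ • (γ (p.1 + p.2) - γ p.1) : ℝ × ℝ → Rn n) :=
    (measurable_snd.inv).smul
      (((hγc.comp (continuous_fst.add continuous_snd)).sub (hγc.comp continuous_fst)).measurable)
  have hgm : Measurable (fun p : ℝ × ℝ => gfun α β s₁ τ₁ τ₂ γ p.1 p.2) := by
    unfold gfun
    exact ((hGbm.comp hzm).mul hqmeas).smul
      ((hfc.comp (continuous_fst.add (continuous_const.mul continuous_snd))).measurable)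
  have hnormle : ∀ p ∈ S, ‖gfun α β s₁ τ₁ τ₂ γ p.1 p.2‖ ≤ M * q p := by
    rintro ⟨u, w⟩ hp
    obtain ⟨hu, hw⟩ := Set.mem_prod.mp hp
    have hnorm : ‖gfun α β s₁ τ₁ τ₂ γ u w‖
        = |Gbeta β (w⁻¹ • (γ (u + w) - γ u))| * q (u, w) := by
      unfold gfun
      rw [norm_smul, harc (u + s₁ * w), mul_one, Real.norm_eq_abs, abs_mul,
        abs_of_nonneg (hq0 (u, w))]
    rw [hnorm]
    apply mul_le_mul_of_nonneg_right ?_ (hq0 (u, w))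
    rcases eq_or_ne w 0 with rfl | hw0
    · have : (0:ℝ)⁻¹ • (γ (u + 0) - γ u) = (0 : Rn n) := by simp
      rw [this]
      unfold Gbeta
      rw [if_neg (by simp)]
      simp [Real.zero_rpow (ne_of_gt hβ)]
      exact hM0
    · have hz := z_eq hC1 u hw0
      apply gbeta_bound hβ hcpos
      · rw [hz]
        exact hlow u ⟨le_of_lt hu.1, hu.2⟩ w ⟨le_of_lt hw.1, le_of_lt hw.2⟩
      · rw [hz]
        have hb := intervalIntegral.norm_integral_le_of_norm_le_const
          (C := 1) (f := fun τ => deriv γ (u + τ * w)) (a := (0:ℝ)) (b := 1)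
          (fun x _ => le_of_eq (harc (u + x * w)))
        simpa using hb
  have hhmeas : AEStronglyMeasurable (fun p : ℝ × ℝ => M * q p) (volume.restrict S) :=
    (measurable_const.mul hqmeas).aestronglyMeasurable
  have hh_int : IntegrableOn (fun p : ℝ × ℝ => M * q p) S volume := by
    refine ⟨hhmeas, ?_⟩
    rw [hasFiniteIntegral_iff_ofReal (ae_of_all _ fun p => mul_nonneg hM0 (hq0 p))]
    calc (∫⁻ p in S, ENNReal.ofReal (M * q p))
        = ENNReal.ofReal M * ∫⁻ p in S, ENNReal.ofReal (q p) := by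
          simp_rw [ENNReal.ofReal_mul hM0]
          exact lintegral_const_mul' _ _ ENNReal.ofReal_ne_top
      _ ≤ ENNReal.ofReal M * Kq := mul_le_mul_right hJle _
      _ < ⊤ := ENNReal.mul_lt_top ENNReal.ofReal_lt_top hKfin
  have hdom : ∀ᵐ p ∂(volume.restrict S), ‖gfun α β s₁ τ₁ τ₂ γ p.1 p.2‖ ≤ M * q p :=
    (ae_restrict_iff' hSmeas).mpr (ae_of_all _ hnormle)
  have hgint : IntegrableOn (fun p : ℝ × ℝ => gfun α β s₁ τ₁ τ₂ γ p.1 p.2) S volume :=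
    Integrable.mono' hh_int hgm.aestronglyMeasurable hdom
  refine ⟨hgint, ?_⟩
  calc ∫ p in S, ‖gfun α β s₁ τ₁ τ₂ γ p.1 p.2‖
      ≤ ∫ p in S, M * q p := integral_mono_ae hgint.norm hh_int hdom
    _ = (∫⁻ p in S, ENNReal.ofReal (M * q p)).toReal := by
        rw [integral_eq_lintegral_of_nonneg_ae
          (ae_of_all _ fun p => mul_nonneg hM0 (hq0 p)) hhmeas]
    _ ≤ (ENNReal.ofReal M * Kq).toReal := by
        apply ENNReal.toReal_mono (ENNReal.mul_ne_top ENNReal.ofReal_ne_top hKfin.ne)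
        calc (∫⁻ p in S, ENNReal.ofReal (M * q p))
            = ENNReal.ofReal M * ∫⁻ p in S, ENNReal.ofReal (q p) := by
              simp_rw [ENNReal.ofReal_mul hM0]
              exact lintegral_const_mul' _ _ ENNReal.ofReal_ne_top
          _ ≤ ENNReal.ofReal M * Kq := mul_le_mul_right hJle _


end
end

section
/- Let n ≥ 1 and let γ ∈ C¹(ℝ/ℤ,ℝⁿ) be parametrized by arc-length, i.e. |γ'(u)| = 1 for all u. Then for all u ∈ ℝ/ℤ and all w ∈ ℝ: w² − |γ(u+w)−γ(u)|² = (w²/2)·∫₀¹∫₀¹ |γ'(u+τ₁w) − γ'(u+τ₂w)|² dτ₁ dτ₂. -/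
open MeasureTheory Filter Set
open scoped RealInnerProductSpace ENNReal Topology

noncomputable section

variable {n : ℕ}

/-- For a `C¹` closed curve parametrized by arc-length,
`w² − |γ(u+w)−γ(u)|² = (w²/2)·∬_{[0,1]²} |γ'(u+τ₁w) − γ'(u+τ₂w)|² dτ₁ dτ₂`. -/
theorem statement18 {n : ℕ} (hn : 1 ≤ n) {γ : ℝ → Rn n}
    (hper : Function.Periodic γ 1) (hC1 : ContDiff ℝ 1 γ) (harc : ArcLengthParam γ)
    (u w : ℝ) :
    w ^ 2 - ‖γ (u + w) - γ u‖ ^ 2 =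
      w ^ 2 / 2 * ∫ τ₁ in (0:ℝ)..1, ∫ τ₂ in (0:ℝ)..1,
        ‖deriv γ (u + τ₁ * w) - deriv γ (u + τ₂ * w)‖ ^ 2 := by
  have hdc : Continuous (deriv γ) := hC1.continuous_deriv le_rfl
  set g : ℝ → Rn n := fun τ => deriv γ (u + τ * w) with hg
  have hgc : Continuous g := hdc.comp (by continuity)
  have hunit : ∀ τ : ℝ, ‖g τ‖ = 1 := fun τ => harc _
  set I : Rn n := ∫ τ in (0:ℝ)..1, g τ with hI
  have hIoc : IntegrableOn g (Ioc (0:ℝ) 1) volume :=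
    (hgc.integrableOn_Icc (a := 0) (b := 1)).mono_set Ioc_subset_Icc_self
  have hIset : I = ∫ τ in Ioc (0:ℝ) 1, g τ := intervalIntegral.integral_of_le zero_le_one
  -- key : γ (u+w) - γ u = w • I
  have key : γ (u + w) - γ u = w • I := by
    rcases eq_or_ne w 0 with h0 | h0
    · simp [h0]
    · have hftc : ∫ t in u..(u + w), deriv γ t = γ (u + w) - γ u :=
        intervalIntegral.integral_deriv_eq_sub (fun t _ => hC1.differentiable one_ne_zero t)
          (hdc.intervalIntegrable _ _)
      have hsub : ∫ τ in (0:ℝ)..1, deriv γ (w * τ + u)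
          = w⁻¹ • ∫ t in (w * 0 + u)..(w * 1 + u), deriv γ t :=
        intervalIntegral.integral_comp_mul_add (deriv γ) h0 u
      have hgeq : I = ∫ τ in (0:ℝ)..1, deriv γ (w * τ + u) := by
        rw [hI]
        congr 1
        funext τ
        show deriv γ (u + τ * w) = deriv γ (w * τ + u)
        ring_nf
      rw [hgeq, hsub, smul_smul, mul_inv_cancel₀ h0, one_smul]
      rw [show w * 0 + u = u by ring, show w * 1 + u = u + w by ring, hftc]
  -- inner integral identities
  have hinner1 : ∀ τ₁ : ℝ, ∫ τ₂ in (0:ℝ)..1, ⟪g τ₁, g τ₂⟫ = ⟪g τ₁, I⟫ := by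
    intro τ₁
    rw [hIset, ← integral_inner hIoc, intervalIntegral.integral_of_le zero_le_one]
  have hinner2 : ∫ τ₁ in (0:ℝ)..1, ⟪g τ₁, I⟫ = ⟪I, I⟫ := by
    rw [intervalIntegral.integral_congr
      (g := fun τ₁ => (⟪I, g τ₁⟫ : ℝ)) (fun τ₁ _ => real_inner_comm _ _)]
    rw [intervalIntegral.integral_of_le zero_le_one]
    rw [integral_inner hIoc, ← hIset]
  -- inner RHS integral
  have hin : ∀ τ₁ : ℝ, ∫ τ₂ in (0:ℝ)..1, ‖g τ₁ - g τ₂‖ ^ 2 = 2 - 2 * ⟪g τ₁, I⟫ := by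
    intro τ₁
    have heq : ∀ τ₂ : ℝ, ‖g τ₁ - g τ₂‖ ^ 2 = 2 - 2 * ⟪g τ₁, g τ₂⟫ := by
      intro τ₂
      rw [norm_sub_sq_real, hunit, hunit]; ring
    rw [intervalIntegral.integral_congr (fun τ₂ _ => heq τ₂)]
    have hInt : IntervalIntegrable (fun τ₂ => ⟪g τ₁, g τ₂⟫) volume 0 1 :=
      (continuous_const.inner hgc).intervalIntegrable _ _
    rw [intervalIntegral.integral_sub (intervalIntegrable_const) (hInt.const_mul 2),
      intervalIntegral.integral_const_mul, hinner1 τ₁]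
    simp
  -- outer RHS integral
  have hout : ∫ τ₁ in (0:ℝ)..1, ∫ τ₂ in (0:ℝ)..1, ‖g τ₁ - g τ₂‖ ^ 2 = 2 - 2 * ⟪I, I⟫ := by
    rw [intervalIntegral.integral_congr (fun τ₁ _ => hin τ₁)]
    have hInt : IntervalIntegrable (fun τ₁ => ⟪g τ₁, I⟫) volume 0 1 :=
      (hgc.inner continuous_const).intervalIntegrable _ _
    rw [intervalIntegral.integral_sub (intervalIntegrable_const) (hInt.const_mul 2),
      intervalIntegral.integral_const_mul, hinner2]
    simp
  have hnorm : ‖γ (u + w) - γ u‖ ^ 2 = w ^ 2 * ⟪I, I⟫ := by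
    rw [key, norm_smul, mul_pow, Real.norm_eq_abs, sq_abs, real_inner_self_eq_norm_sq]
  have hrhs : (∫ τ₁ in (0:ℝ)..1, ∫ τ₂ in (0:ℝ)..1,
      ‖deriv γ (u + τ₁ * w) - deriv γ (u + τ₂ * w)‖ ^ 2) = 2 - 2 * ⟪I, I⟫ := hout
  rw [hnorm, hrhs]; ring

end
end
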